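/- The limit as n → ∞ of (Σ_{k≥0, n−5−2k≥0} [F_{2(n−5−2k)+1} + (1/2)F_{2(n−5−2k)}]) / F_{2n+2} exists and equals (φ^{−11} + (1/2)φ^{−12})·(1 − φ^{−4})^{−1} = (65 − 29√5)/20, where Fₖ are the Fibonacci numbers and φ = (1+√5)/2. -/

import Mathlib

open Real Filter

noncomputable def goldenφ : ℝ := (1 + Real.sqrt 5) / 2

private lemma fibR (a b c : ℕ) (h1 : a + 1 = b) (h2 : a + 2 = c) :
    (Nat.fib c : ℝ) = Nat.fib a + Nat.fib b := by
  subst h1 h2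
  push_cast [Nat.fib_add_two]
  ring

private lemma sum_closed (m : ℕ) :
    (∑ k ∈ Finset.range (m / 2 + 1),
        ((Nat.fib (2 * (m - 2 * k) + 1) : ℝ)
          + (1 / 2) * (Nat.fib (2 * (m - 2 * k)) : ℝ)))
      = (2 * (Nat.fib (2 * m + 6) : ℝ) - (Nat.fib (2 * m + 5) : ℝ)
          - (if m % 2 = 0 then 1 else 4)) / 10 := by
  induction m using Nat.twoStepInduction with
  | zero =>
      have h5 : Nat.fib 5 = 5 := by decide
      have h6 : Nat.fib 6 = 8 := by decide
      norm_num [Finset.sum_range_succ, h5, h6]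
  | one =>
      have h7 : Nat.fib 7 = 13 := by decide
      have h8 : Nat.fib 8 = 21 := by decide
      have h2 : Nat.fib 2 = 1 := by decide
      have h3 : Nat.fib 3 = 2 := by decide
      norm_num [Finset.sum_range_succ, h7, h8, h2, h3]
  | more m ih _ =>
      have hrange : (m + 2) / 2 + 1 = (m / 2 + 1) + 1 := by omega
      rw [hrange, Finset.sum_range_succ']
      have hshift : ∀ i ∈ Finset.range (m / 2 + 1),
          ((Nat.fib (2 * (m + 2 - 2 * (i + 1)) + 1) : ℝ)
            + (1 / 2) * (Nat.fib (2 * (m + 2 - 2 * (i + 1))) : ℝ))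
          = ((Nat.fib (2 * (m - 2 * i) + 1) : ℝ)
            + (1 / 2) * (Nat.fib (2 * (m - 2 * i)) : ℝ)) := by
        intro i _
        have : m + 2 - 2 * (i + 1) = m - 2 * i := by omega
        rw [this]
      rw [Finset.sum_congr rfl hshift, ih]
      have i3 : 2 * (m + 2) + 6 = 2 * m + 10 := by omega
      have i4 : 2 * (m + 2) + 5 = 2 * m + 9 := by omega
      have i5 : (m + 2) % 2 = m % 2 := by omega
      rw [i3, i4, i5]
      have e0 : m + 2 - 2 * 0 = m + 2 := by omega
      rw [e0]
      have i1 : 2 * (m + 2) + 1 = 2 * m + 5 := by omega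
      have i2 : 2 * (m + 2) = 2 * m + 4 := by omega
      rw [i1, i2]
      have h6 := fibR (2 * m + 4) (2 * m + 5) (2 * m + 6) (by omega) (by omega)
      have h7 := fibR (2 * m + 5) (2 * m + 6) (2 * m + 7) (by omega) (by omega)
      have h8 := fibR (2 * m + 6) (2 * m + 7) (2 * m + 8) (by omega) (by omega)
      have h9 := fibR (2 * m + 7) (2 * m + 8) (2 * m + 9) (by omega) (by omega)
      have h10 := fibR (2 * m + 8) (2 * m + 9) (2 * m + 10) (by omega) (by omega)
      linarith [h6, h7, h8, h9, h10]

open goldenRatio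

private lemma sqrt5_sq : Real.sqrt 5 ^ 2 = 5 := Real.sq_sqrt (by norm_num)

private lemma sqrt5_lb : (2 : ℝ) < Real.sqrt 5 := by
  nlinarith [sqrt5_sq, Real.sqrt_nonneg 5]

private lemma sqrt5_ub : Real.sqrt 5 < 3 := by
  nlinarith [sqrt5_sq, Real.sqrt_nonneg 5]

private lemma key_alg (s E X Y p5 p6 p12 q5 q6 q12 : ℝ)
    (hs : s ≠ 0) (hX : X ≠ 0) (hd : X * p12 - Y * q12 ≠ 0) :
    ((2 * ((X * p6 - Y * q6) / s) - (X * p5 - Y * q5) / s - E) / 10)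
        / ((X * p12 - Y * q12) / s)
      = (2 * (p6 - q6 * (Y / X)) - (p5 - q5 * (Y / X)) - s * E * X⁻¹)
        / (10 * (p12 - q12 * (Y / X))) := by
  have hd2 : p12 - q12 * (Y / X) ≠ 0 := by
    intro h
    apply hd
    have h2 : X * (p12 - q12 * (Y / X)) = X * p12 - Y * q12 := by
      field_simp
    rw [← h2, h, mul_zero]
  have hB : (X * p12 - Y * q12) / s ≠ 0 := div_ne_zero hd hs
  have hD' : 10 * (p12 - q12 * (Y / X)) ≠ 0 := mul_ne_zero (by norm_num) hd2
  rw [div_eq_div_iff hB hD']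
  field_simp

set_option maxHeartbeats 1000000 in
private lemma aux_tendsto :
    Tendsto (fun m : ℕ =>
        ((2 * (Nat.fib (2 * m + 6) : ℝ) - (Nat.fib (2 * m + 5) : ℝ)
          - (if m % 2 = 0 then 1 else 4)) / 10) / (Nat.fib (2 * m + 12) : ℝ))
      atTop (nhds ((2 * goldenφ ^ 6 - goldenφ ^ 5) / (10 * goldenφ ^ 12))) := by
  show Tendsto _ atTop (nhds ((2 * φ ^ 6 - φ ^ 5) / (10 * φ ^ 12)))
  have hφ : (0 : ℝ) < φ := goldenRatio_pos
  have hratio_lt : ψ ^ 2 / φ ^ 2 < 1 := by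
    rw [div_lt_one (by positivity)]
    have := sqrt5_lb
    simp only [goldenRatio, goldenConj]
    nlinarith
  have hratio_nonneg : (0 : ℝ) ≤ ψ ^ 2 / φ ^ 2 := by positivity
  have hinv_lt : (φ ^ 2)⁻¹ < 1 := by
    rw [inv_lt_one_iff₀]
    right
    nlinarith [one_lt_goldenRatio]
  have hinv_nonneg : (0 : ℝ) ≤ (φ ^ 2)⁻¹ := by positivity
  have hs : Tendsto (fun m : ℕ => (ψ ^ 2 / φ ^ 2) ^ m) atTop (nhds 0) :=
    tendsto_pow_atTop_nhds_zero_of_lt_one hratio_nonneg hratio_lt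
  have ht : Tendsto (fun m : ℕ => ((φ ^ 2)⁻¹) ^ m) atTop (nhds 0) :=
    tendsto_pow_atTop_nhds_zero_of_lt_one hinv_nonneg hinv_lt
  have heterm : Tendsto (fun m : ℕ =>
      Real.sqrt 5 * (if m % 2 = 0 then (1 : ℝ) else 4) * ((φ ^ 2)⁻¹) ^ m)
      atTop (nhds 0) := by
    refine squeeze_zero_norm (a := fun m => 12 * ((φ ^ 2)⁻¹) ^ m) (fun m => ?_) ?_
    · have he1 : (0 : ℝ) ≤ (if m % 2 = 0 then (1 : ℝ) else 4) ∧
          (if m % 2 = 0 then (1 : ℝ) else 4) ≤ 4 := by split <;> norm_num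
      have hpow : (0 : ℝ) ≤ ((φ ^ 2)⁻¹) ^ m := by positivity
      have hsqrt : (0 : ℝ) ≤ Real.sqrt 5 := Real.sqrt_nonneg 5
      have h12 : Real.sqrt 5 * (if m % 2 = 0 then (1 : ℝ) else 4) ≤ 12 := by
        have := sqrt5_ub
        split <;> nlinarith
      rw [Real.norm_eq_abs,
        abs_of_nonneg (mul_nonneg (mul_nonneg hsqrt he1.1) hpow)]
      exact mul_le_mul_of_nonneg_right h12 hpow
    · simpa only [mul_zero] using ht.const_mul (12 : ℝ)
  have hNlim : Tendsto (fun m : ℕ =>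
      2 * (φ ^ 6 - ψ ^ 6 * (ψ ^ 2 / φ ^ 2) ^ m)
        - (φ ^ 5 - ψ ^ 5 * (ψ ^ 2 / φ ^ 2) ^ m)
        - Real.sqrt 5 * (if m % 2 = 0 then (1 : ℝ) else 4) * ((φ ^ 2)⁻¹) ^ m)
      atTop (nhds (2 * φ ^ 6 - φ ^ 5)) := by
    have h1 := (((tendsto_const_nhds (x := φ ^ 6)).sub (hs.const_mul (ψ ^ 6))).const_mul
      (2 : ℝ)).sub ((tendsto_const_nhds (x := φ ^ 5)).sub (hs.const_mul (ψ ^ 5)))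
    have h2 := h1.sub heterm
    simpa only [mul_zero, sub_zero] using h2
  have hDlim : Tendsto (fun m : ℕ =>
      10 * (φ ^ 12 - ψ ^ 12 * (ψ ^ 2 / φ ^ 2) ^ m)) atTop (nhds (10 * φ ^ 12)) := by
    have h1 := ((tendsto_const_nhds (x := φ ^ 12)).sub
      (hs.const_mul (ψ ^ 12))).const_mul (10 : ℝ)
    simpa only [mul_zero, sub_zero] using h1
  have hDne : (10 : ℝ) * φ ^ 12 ≠ 0 := by positivity
  have key : (fun m : ℕ =>
        ((2 * (Nat.fib (2 * m + 6) : ℝ) - (Nat.fib (2 * m + 5) : ℝ)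
          - (if m % 2 = 0 then 1 else 4)) / 10) / (Nat.fib (2 * m + 12) : ℝ))
      = fun m : ℕ =>
        (2 * (φ ^ 6 - ψ ^ 6 * (ψ ^ 2 / φ ^ 2) ^ m)
          - (φ ^ 5 - ψ ^ 5 * (ψ ^ 2 / φ ^ 2) ^ m)
          - Real.sqrt 5 * (if m % 2 = 0 then (1 : ℝ) else 4) * ((φ ^ 2)⁻¹) ^ m)
        / (10 * (φ ^ 12 - ψ ^ 12 * (ψ ^ 2 / φ ^ 2) ^ m)) := by
    funext m
    have hb : ∀ j : ℕ, (Nat.fib j : ℝ) = (φ ^ j - ψ ^ j) / Real.sqrt 5 :=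
      Real.coe_fib_eq
    have hsq : (0 : ℝ) < Real.sqrt 5 := by
      have := sqrt5_lb; linarith
    have hsne : Real.sqrt 5 ≠ 0 := ne_of_gt hsq
    have hφm : (0 : ℝ) < φ ^ (2 * m) := by positivity
    have hφmne : (φ : ℝ) ^ (2 * m) ≠ 0 := ne_of_gt hφm
    have hfibpos : (0 : ℝ) < (Nat.fib (2 * m + 12) : ℝ) := by
      exact_mod_cast Nat.fib_pos.mpr (by omega)
    have hX : φ ^ (2 * m + 12) - ψ ^ (2 * m + 12)
        = Real.sqrt 5 * (Nat.fib (2 * m + 12) : ℝ) := by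
      rw [hb (2 * m + 12)]
      field_simp
    have hdenpos : (0 : ℝ) < φ ^ (2 * m + 12) - ψ ^ (2 * m + 12) := by
      rw [hX]; exact mul_pos hsq hfibpos
    have hrw1 : ((ψ : ℝ) ^ 2 / φ ^ 2) ^ m = ψ ^ (2 * m) / φ ^ (2 * m) := by
      rw [div_pow, ← pow_mul, ← pow_mul]
    have hrw2 : (((φ : ℝ) ^ 2)⁻¹) ^ m = (φ ^ (2 * m))⁻¹ := by
      rw [inv_pow, ← pow_mul]
    rw [hb (2 * m + 6), hb (2 * m + 5), hb (2 * m + 12), hrw1, hrw2]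
    have hdenne : φ ^ (2 * m) * φ ^ 12 - ψ ^ (2 * m) * ψ ^ 12 ≠ 0 := by
      have : φ ^ (2 * m + 12) = φ ^ (2 * m) * φ ^ 12 := pow_add φ (2 * m) 12
      have h2 : ψ ^ (2 * m + 12) = ψ ^ (2 * m) * ψ ^ 12 := pow_add ψ (2 * m) 12
      rw [this, h2] at hdenpos
      linarith
    rw [pow_add φ (2 * m) 6, pow_add ψ (2 * m) 6, pow_add φ (2 * m) 5,
      pow_add ψ (2 * m) 5, pow_add φ (2 * m) 12, pow_add ψ (2 * m) 12]
    exact key_alg (Real.sqrt 5) _ (φ ^ (2 * m)) (ψ ^ (2 * m))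
      (φ ^ 5) (φ ^ 6) (φ ^ 12) (ψ ^ 5) (ψ ^ 6) (ψ ^ 12) hsne hφmne hdenne
  rw [key]
  exact hNlim.div hDlim hDne

theorem robinson_ringmode_frequency_limit :
    Tendsto
      (fun n : ℕ =>
        (∑ k ∈ Finset.range ((n - 5) / 2 + 1),
            ((Nat.fib (2 * (n - 5 - 2 * k) + 1) : ℝ)
              + (1 / 2) * (Nat.fib (2 * (n - 5 - 2 * k)) : ℝ)))
          / (Nat.fib (2 * n + 2) : ℝ))
      atTop
      (nhds (((goldenφ ^ 11)⁻¹ + (1 / 2) * (goldenφ ^ 12)⁻¹)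
        * (1 - (goldenφ ^ 4)⁻¹)⁻¹)) ∧
    ((goldenφ ^ 11)⁻¹ + (1 / 2) * (goldenφ ^ 12)⁻¹) * (1 - (goldenφ ^ 4)⁻¹)⁻¹ =
      (65 - 29 * Real.sqrt 5) / 20 := by
  have hφeq : goldenφ = φ := rfl
  have hφ : (0 : ℝ) < goldenφ := goldenRatio_pos
  have hφ1 : (1 : ℝ) < goldenφ := one_lt_goldenRatio
  have hφ4 : (1 : ℝ) < goldenφ ^ 4 := one_lt_pow₀ hφ1 (by norm_num)
  have hsq := sqrt5_sq
  have hslb := sqrt5_lb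
  have target_eq : ((goldenφ ^ 11)⁻¹ + (1 / 2) * (goldenφ ^ 12)⁻¹)
      * (1 - (goldenφ ^ 4)⁻¹)⁻¹ = (2 * goldenφ ^ 6 - goldenφ ^ 5) / (10 * goldenφ ^ 12) := by
    have hg2 : goldenφ ^ 2 = goldenφ + 1 := goldenRatio_sq
    have h1 : goldenφ ≠ 0 := ne_of_gt hφ
    have h2 : (1 : ℝ) - (goldenφ ^ 4)⁻¹ ≠ 0 := by
      have : (goldenφ ^ 4)⁻¹ < 1 := by
        rw [inv_lt_one_iff₀]; right; exact hφ4
      linarith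
    have h3 : goldenφ ^ 4 - 1 ≠ 0 := by
      have : (1:ℝ) < goldenφ ^ 4 := hφ4
      intro h; nlinarith
    field_simp
    linear_combination (-4*goldenφ^4 - 2*goldenφ^3 - 6*goldenφ^2
      - 8*goldenφ - 10) * hg2
  have target2 : ((goldenφ ^ 11)⁻¹ + (1 / 2) * (goldenφ ^ 12)⁻¹)
      * (1 - (goldenφ ^ 4)⁻¹)⁻¹ = (65 - 29 * Real.sqrt 5) / 20 := by
    rw [target_eq, show goldenφ = (1 + Real.sqrt 5)/2 from rfl]
    have h1 : (1 : ℝ) + Real.sqrt 5 ≠ 0 := by positivity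
    field_simp
    linear_combination (130 + 340*Real.sqrt 5^1 + 2350*Real.sqrt 5^2 + 3400*Real.sqrt 5^3 + 2990*Real.sqrt 5^4 + 1380*Real.sqrt 5^5 + 290*Real.sqrt 5^6) * hsq
  refine ⟨?_, target2⟩
  rw [target_eq]
  rw [← tendsto_add_atTop_iff_nat 5]
  refine aux_tendsto.congr fun m => ?_
  simp only [Nat.add_sub_cancel]
  rw [sum_closed m, show 2 * (m + 5) + 2 = 2 * m + 12 by omega]
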